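/- If a discrete-time system admits an implication-form finite-step ωISS Lyapunov function V (i.e., α̲(ω(ξ)) ≤ V(ξ) ≤ ᾱ(ω(ξ)) and V(ξ) ≥ γ_imp(‖u‖) implies V(x(M,ξ,u)) − V(ξ) ≤ −α_imp(V(ξ)) for a positive definite α_imp with id − α_imp ∈ K∞ and γ_imp ∈ K) and g is globally K-bounded with respect to ω, then V is a max-form finite-step ωISS Lyapunov function, i.e., there exist α_max ∈ K∞ with α_max < id and γ_max ∈ K such that V(x(M,ξ,u)) ≤ max{α_max(V(ξ)), γ_max(‖u‖)} for all ξ and bounded inputs u. -/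

import Mathlib

open Filter Topology

/-- Class-K function: continuous, strictly increasing on [0,∞), zero at zero. -/
def ClassK (α : ℝ → ℝ) : Prop :=
  ContinuousOn α (Set.Ici 0) ∧ StrictMonoOn α (Set.Ici 0) ∧ α 0 = 0

/-- Class-K∞ function. -/
def ClassKInf (α : ℝ → ℝ) : Prop :=
  ClassK α ∧ Filter.Tendsto α Filter.atTop Filter.atTop

/-- Class-KL function. -/
def ClassKL (β : ℝ → ℝ → ℝ) : Prop :=
  ContinuousOn (fun p : ℝ × ℝ => β p.1 p.2) (Set.Ici 0 ×ˢ Set.Ici 0) ∧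
  (∀ s, 0 ≤ s → ClassK (fun r => β r s)) ∧
  (∀ r, 0 ≤ r → AntitoneOn (fun s => β r s) (Set.Ici 0) ∧
    Filter.Tendsto (fun s => β r s) Filter.atTop (nhds 0))

/-- Measurement function: continuous and positive semidefinite. -/
def MeasurementFn {E : Type*} [TopologicalSpace E] (ω : E → ℝ) : Prop :=
  Continuous ω ∧ ∀ x, 0 ≤ ω x

/-- Sup-norm of an input sequence. -/
noncomputable def supNorm {U : Type*} [Norm U] (u : ℕ → U) : ℝ := ⨆ k, ‖u k‖

/-- A bounded input sequence. -/
def BddInput {U : Type*} [Norm U] (u : ℕ → U) : Prop := ∃ C, ∀ k, ‖u k‖ ≤ C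

/-- Solution of x(k+1) = g(x(k), u(k)) from initial state ξ. -/
def sol {E U : Type*} (g : E → U → E) (ξ : E) (u : ℕ → U) : ℕ → E
  | 0 => ξ
  | k + 1 => g (sol g ξ u k) (u k)

/-- Composition of gains along a path i(0), i(1), ..., i(k):
`γ (i 0) (i 1) ∘ γ (i 1) (i 2) ∘ ⋯ ∘ γ (i (k-1)) (i k)`. -/
def compAlong {ℓ : ℕ} (γ : Fin ℓ → Fin ℓ → ℝ → ℝ) (i : ℕ → Fin ℓ) : ℕ → ℝ → ℝ
  | 0 => id
  | k + 1 => (compAlong γ i k) ∘ γ (i k) (i (k + 1))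

/-- Cyclic small-gain condition: all gain compositions along cycles of
length at most ℓ are strictly below the identity. -/
def SmallGainCond {ℓ : ℕ} (γ : Fin ℓ → Fin ℓ → ℝ → ℝ) : Prop :=
  ∀ r : ℕ, 1 ≤ r → r ≤ ℓ → ∀ i : ℕ → Fin ℓ, i r = i 0 →
    ∀ s : ℝ, 0 < s → compAlong γ i r s < s

/-- A monotonic norm on ℝ^ℓ. -/
def MonotoneNorm {ℓ : ℕ} (μ : (Fin ℓ → ℝ) → ℝ) : Prop :=
  (∀ z, 0 ≤ μ z) ∧ (∀ z, μ z = 0 ↔ z = 0) ∧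
  (∀ (c : ℝ) z, μ (c • z) = |c| * μ z) ∧
  (∀ z w, μ (z + w) ≤ μ z + μ w) ∧
  (∀ z w : Fin ℓ → ℝ, (∀ i, 0 ≤ z i) → (∀ i, z i ≤ w i) → μ z ≤ μ w)

/-- Clamped version of a function, agreeing with `f` on `[0,∞)`. -/
noncomputable def clampFn (f : ℝ → ℝ) : ℝ → ℝ := fun s => f (max s 0)

lemma clampFn_cont {f : ℝ → ℝ} (hf : ClassK f) : Continuous (clampFn f) :=
  hf.1.comp_continuous (continuous_id.max continuous_const) (fun _ => Set.mem_Ici.2 (le_max_right _ _))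

lemma clampFn_mono {f : ℝ → ℝ} (hf : ClassK f) : Monotone (clampFn f) :=
  fun _ _ hab => hf.2.1.monotoneOn (Set.mem_Ici.2 (le_max_right _ _)) (Set.mem_Ici.2 (le_max_right _ _))
    (max_le_max hab le_rfl)

lemma clampFn_eq {f : ℝ → ℝ} {s : ℝ} (hs : 0 ≤ s) : clampFn f s = f s := by
  simp [clampFn, max_eq_left hs]

lemma clampFn_zero {f : ℝ → ℝ} (hf : ClassK f) : clampFn f 0 = 0 := by
  simp [clampFn, hf.2.2]

lemma clampFn_nonneg {f : ℝ → ℝ} (hf : ClassK f) (s : ℝ) : 0 ≤ clampFn f s := by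
  rcases lt_or_ge 0 (max s 0) with h | h
  · have := hf.2.1 (le_refl (0:ℝ)) (le_of_lt h) h
    rw [hf.2.2] at this
    exact le_of_lt this
  · have : max s 0 = 0 := le_antisymm h (le_max_right _ _)
    simp [clampFn, this, hf.2.2]

/-- Iterated bound `r ↦ k1 r + k2 s` composed `k` times. -/
noncomputable def iterBd (k1 k2 : ℝ → ℝ) : ℕ → ℝ → ℝ → ℝ
  | 0, r, _ => r
  | k + 1, r, s => k1 (iterBd k1 k2 k r s) + k2 s

lemma iterBd_mono {k1 k2 : ℝ → ℝ} (h1 : Monotone k1) (h2 : Monotone k2) (k : ℕ) :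
    Monotone (fun p : ℝ × ℝ => iterBd k1 k2 k p.1 p.2) := by
  induction k with
  | zero => exact monotone_fst
  | succ k ih => exact (h1.comp ih).add (h2.comp monotone_snd)

lemma iterBd_cont {k1 k2 : ℝ → ℝ} (h1 : Continuous k1) (h2 : Continuous k2) (k : ℕ) :
    Continuous (fun p : ℝ × ℝ => iterBd k1 k2 k p.1 p.2) := by
  induction k with
  | zero => exact continuous_fst
  | succ k ih => exact (h1.comp ih).add (h2.comp continuous_snd)

lemma iterBd_zero {k1 k2 : ℝ → ℝ} (h1 : k1 0 = 0) (h2 : k2 0 = 0) (k : ℕ) :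
    iterBd k1 k2 k 0 0 = 0 := by
  induction k with
  | zero => rfl
  | succ k ih => simp [iterBd, ih, h1, h2]

/-- implication-form finite-step ωISS Lyapunov function plus global
K-boundedness yields a max-form finite-step ωISS Lyapunov function. -/
theorem implicationform_to_maxform (n m : ℕ)
    (g : EuclideanSpace ℝ (Fin n) → EuclideanSpace ℝ (Fin m) → EuclideanSpace ℝ (Fin n))
    (hg : Continuous fun p : EuclideanSpace ℝ (Fin n) × EuclideanSpace ℝ (Fin m) => g p.1 p.2)
    (ω : EuclideanSpace ℝ (Fin n) → ℝ) (hω : MeasurementFn ω)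
    (M : ℕ) (hM : 0 < M)
    (V : EuclideanSpace ℝ (Fin n) → ℝ) (hVcont : Continuous V)
    (αl αu : ℝ → ℝ) (hαl : ClassKInf αl) (hαu : ClassKInf αu)
    (hsand : ∀ ξ, αl (ω ξ) ≤ V ξ ∧ V ξ ≤ αu (ω ξ))
    -- α_imp is positive definite and id − α_imp is of class K∞
    (αimp : ℝ → ℝ) (hαimpC : ContinuousOn αimp (Set.Ici 0)) (hαimp0 : αimp 0 = 0)
    (hαimppos : ∀ s > 0, 0 < αimp s)
    (hid : ClassKInf (fun s => s - αimp s))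
    (γimp : ℝ → ℝ) (hγimp : ClassK γimp)
    (himp : ∀ ξ u, BddInput u → γimp (supNorm u) ≤ V ξ →
      V (sol g ξ u M) - V ξ ≤ -(αimp (V ξ)))
    -- global K-boundedness
    (κ₁ κ₂ : ℝ → ℝ) (hκ₁ : ClassKInf κ₁) (hκ₂ : ClassKInf κ₂)
    (hkb : ∀ ξ μ, ω (g ξ μ) ≤ κ₁ (ω ξ) + κ₂ ‖μ‖) :
    ∃ αmax γmax : ℝ → ℝ, ClassKInf αmax ∧ (∀ s > 0, αmax s < s) ∧ ClassK γmax ∧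
      ∀ ξ u, BddInput u →
        V (sol g ξ u M) ≤ max (αmax (V ξ)) (γmax (supNorm u)) := by
  classical
  -- the order isomorphism induced by αl on [0,∞)
  have hαlK := hαl.1
  have hαlnn : ∀ r : ℝ, 0 ≤ r → 0 ≤ αl r := by
    intro r hr
    rcases eq_or_lt_of_le hr with h | h
    · simp [← h, hαlK.2.2]
    · have := hαlK.2.1 (le_refl (0:ℝ)) hr h
      rw [hαlK.2.2] at this; exact this.le
  set f : Set.Ici (0:ℝ) → Set.Ici (0:ℝ) :=
    fun x => ⟨αl x, hαlnn x x.2⟩ with hf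
  have hfsm : StrictMono f := by
    intro a b hab
    exact Subtype.mk_lt_mk.2 (hαlK.2.1 a.2 b.2 hab)
  have hfsurj : Function.Surjective f := by
    rintro ⟨y, hy⟩
    obtain ⟨b, hby, hb0⟩ :=
      ((hαl.2.eventually_ge_atTop y).and (eventually_ge_atTop (0:ℝ))).exists
    have hsub : Set.Icc (0:ℝ) b ⊆ Set.Ici 0 := fun x hx => hx.1
    have := intermediate_value_Icc hb0 (hαlK.1.mono hsub)
    have hymem : y ∈ Set.Icc (αl 0) (αl b) := by
      rw [hαlK.2.2]; exact ⟨hy, hby⟩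
    obtain ⟨x, hx, hxy⟩ := this hymem
    exact ⟨⟨x, hx.1⟩, Subtype.ext hxy⟩
  set φ : Set.Ici (0:ℝ) ≃o Set.Ici (0:ℝ) :=
    StrictMono.orderIsoOfSurjective f hfsm hfsurj with hφ
  have hφapp : ∀ x, φ x = f x := fun x => by
    simp [hφ, StrictMono.coe_orderIsoOfSurjective]
  -- the "inverse" of αl as a function on ℝ
  set q : ℝ → ℝ := fun t => ((φ.symm ⟨max t 0, Set.mem_Ici.2 (le_max_right _ _)⟩ : Set.Ici (0:ℝ)) : ℝ)
    with hq
  have hqcont : Continuous q := by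
    apply continuous_subtype_val.comp
    exact φ.symm.toHomeomorph.continuous.comp
      (Continuous.subtype_mk (continuous_id.max continuous_const) _)
  have hqmono : Monotone q := by
    intro a b hab
    exact φ.symm.monotone (Subtype.mk_le_mk.2 (max_le_max hab le_rfl))
  have hqinv : ∀ r : ℝ, 0 ≤ r → q (αl r) = r := by
    intro r hr
    have h1 : (⟨max (αl r) 0, Set.mem_Ici.2 (le_max_right _ _)⟩ : Set.Ici (0:ℝ)) = φ ⟨r, hr⟩ := by
      rw [hφapp]
      exact Subtype.ext (max_eq_left (hαlnn r hr))
    simp only [hq, h1, φ.symm_apply_apply]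
  have hq0 : q 0 = 0 := by
    have := hqinv 0 le_rfl
    rwa [hαlK.2.2] at this
  -- clamped gains
  set k1 := clampFn κ₁ with hk1
  set k2 := clampFn κ₂ with hk2
  set au := clampFn αu with hau
  set gi := clampFn γimp with hgi
  have hk1m := clampFn_mono hκ₁.1
  have hk2m := clampFn_mono hκ₂.1
  have haum := clampFn_mono hαu.1
  have hgim := clampFn_mono hγimp
  -- candidate gain
  set γcand : ℝ → ℝ := fun s => au (iterBd k1 k2 M (q (gi s)) s) with hγcand
  have hγcandmono : Monotone γcand := by
    apply haum.comp
    exact (iterBd_mono hk1m hk2m M).comp (fun a b hab => Prod.mk_le_mk.2 ⟨(hqmono.comp hgim) hab, hab⟩)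
  have hγcandcont : Continuous γcand := by
    apply (clampFn_cont hαu.1).comp
    exact (iterBd_cont (clampFn_cont hκ₁.1) (clampFn_cont hκ₂.1) M).comp
      (Continuous.prodMk (hqcont.comp (clampFn_cont hγimp)) continuous_id)
  have hγcand0 : γcand 0 = 0 := by
    simp only [hγcand, hgi, hau, hk1, hk2, clampFn_zero hγimp, hq0,
      iterBd_zero (clampFn_zero hκ₁.1) (clampFn_zero hκ₂.1) M, clampFn_zero hαu.1]
  refine ⟨fun s => s - αimp s, fun s => γcand s + max s 0, hid, ?_, ?_, ?_⟩
  · intro s hs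
    exact sub_lt_self _ (hαimppos s hs)
  · refine ⟨?_, ?_, ?_⟩
    · exact (hγcandcont.add (continuous_id.max continuous_const)).continuousOn
    · intro a ha b hb hab
      have h1 : γcand a ≤ γcand b := hγcandmono hab.le
      have h2 : max a 0 < max b 0 := by
        rw [max_eq_left ha, max_eq_left (le_trans ha hab.le)]; exact hab
      exact add_lt_add_of_le_of_lt h1 h2
    · simp [hγcand0]
  · intro ξ u hu
    obtain ⟨C, hC⟩ := hu
    have hbdd : BddAbove (Set.range fun k => ‖u k‖) :=
      ⟨C, by rintro _ ⟨k, rfl⟩; exact hC k⟩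
    have hle : ∀ k, ‖u k‖ ≤ supNorm u := fun k => le_ciSup hbdd k
    have hs0 : 0 ≤ supNorm u := le_trans (norm_nonneg _) (hle 0)
    set s := supNorm u with hsdef
    by_cases hcase : γimp s ≤ V ξ
    · have := himp ξ u ⟨C, hC⟩ hcase
      have : V (sol g ξ u M) ≤ V ξ - αimp (V ξ) := by linarith
      exact le_trans this (le_max_left _ _)
    · push_neg at hcase
      -- trajectory bound
      have key : ∀ k, ω (sol g ξ u k) ≤ iterBd k1 k2 k (ω ξ) s := by
        intro k
        induction k with
        | zero => exact le_refl _
        | succ k ih =>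
          show ω (g (sol g ξ u k) (u k)) ≤ k1 (iterBd k1 k2 k (ω ξ) s) + k2 s
          have h1 := hkb (sol g ξ u k) (u k)
          have e1 : κ₁ (ω (sol g ξ u k)) = k1 (ω (sol g ξ u k)) :=
            (clampFn_eq (hω.2 _)).symm
          have e2 : κ₂ ‖u k‖ = k2 ‖u k‖ := (clampFn_eq (norm_nonneg _)).symm
          calc ω (g (sol g ξ u k) (u k)) ≤ κ₁ (ω (sol g ξ u k)) + κ₂ ‖u k‖ := h1
            _ = k1 (ω (sol g ξ u k)) + k2 ‖u k‖ := by rw [e1, e2]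
            _ ≤ k1 (iterBd k1 k2 k (ω ξ) s) + k2 s :=
                add_le_add (hk1m ih) (hk2m (hle k))
      -- bound the initial state by the gain of the input
      have hωξ : ω ξ ≤ q (gi s) := by
        have h1 : αl (ω ξ) ≤ gi s := by
          rw [hgi, clampFn_eq hs0]
          exact le_trans (hsand ξ).1 hcase.le
        have := hqmono h1
        rwa [hqinv _ (hω.2 ξ)] at this
      have h2 : iterBd k1 k2 M (ω ξ) s ≤ iterBd k1 k2 M (q (gi s)) s :=
        iterBd_mono hk1m hk2m M (Prod.mk_le_mk.2 ⟨hωξ, le_rfl⟩)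
      have h3 : V (sol g ξ u M) ≤ γcand s := by
        calc V (sol g ξ u M) ≤ αu (ω (sol g ξ u M)) := (hsand _).2
          _ = au (ω (sol g ξ u M)) := (clampFn_eq (hω.2 _)).symm
          _ ≤ au (iterBd k1 k2 M (q (gi s)) s) := haum (le_trans (key M) h2)
      have h4 : γcand s ≤ γcand s + max s 0 :=
        le_add_of_nonneg_right (le_max_right _ _)
      exact le_trans (le_trans h3 h4) (le_max_right _ _)
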